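/- Generalized g-leakage representation of Sibson mutual information: let X and Y be finite nonempty sets, let α ∈ (0,1) ∪ (1,∞), let p be a strictly positive probability distribution on X, and let W be a channel from X to Y. Let p̃(x) = p(x)^{1/α} / ∑_{x'} p(x')^{1/α}. Then inf over strictly positive probability distributions q on Y of (1/(α−1)) · log ∑_{x,y} p(x) · W(y|x)^α · q(y)^{1−α} = log( sup over strictly positive families r_{X|Y} of (∑_{x,y} p̃(x) · W(y|x) · r(x|y)^{(α−1)/α})^{α/(α−1)} ) − log( sup over strictly positive probability distributions r₀ on X of (∑_x p̃(x) · r₀(x)^{(α−1)/α})^{α/(α−1)} ); that is, the Sibson mutual information of order α equals the generalized multiplicative g-leakage for the Kolmogorov–Nagumo function ln_{1/α}, the soft 0-1 score, and the (1/α)-tilted prior. -/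

import Mathlib

open Real BigOperators Finset Filter

section core

variable {Z : Type*} [Fintype Z] [Nonempty Z]

/-- Hölder upper bound, case `0 < γ < 1`. -/
lemma sib_bound_pos {γ : ℝ} (hγ0 : 0 < γ) (hγ1 : γ < 1)
    (a : Z → ℝ) (ha : ∀ z, 0 ≤ a z) (q : Z → ℝ) (hq : ∀ z, 0 < q z) (hq1 : ∑ z, q z = 1) :
    ∑ z, a z * q z ^ γ ≤ (∑ z, a z ^ (1 / (1 - γ))) ^ (1 - γ) := by
  have h1γ : 0 < 1 - γ := by linarith
  have hpq : (1 / (1 - γ)).HolderConjugate (1 / γ) := by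
    rw [Real.holderConjugate_iff]
    constructor
    · rw [lt_div_iff₀ h1γ]; linarith
    · rw [one_div, one_div, inv_inv, inv_inv]; ring
  have h := Real.inner_le_Lp_mul_Lq_of_nonneg (s := Finset.univ) hpq
    (f := a) (g := fun z => q z ^ γ) (fun i _ => ha i) (fun i _ => rpow_nonneg (hq i).le γ)
  have e1 : (1 : ℝ) / (1 / (1 - γ)) = 1 - γ := by field_simp
  have e2 : (1 : ℝ) / (1 / γ) = γ := by field_simp
  rw [e1, e2] at h
  have e3 : ∑ z, (q z ^ γ) ^ (1 / γ) = 1 := by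
    have : ∀ z : Z, (q z ^ γ) ^ (1 / γ) = q z := fun z => by
      rw [one_div, Real.rpow_rpow_inv (hq z).le hγ0.ne']
    simp_rw [this]; exact hq1
  rw [e3, Real.one_rpow, mul_one] at h
  exact h

/-- Reverse Hölder lower bound, case `γ < 0`. -/
lemma sib_bound_neg {γ : ℝ} (hγ : γ < 0)
    (a : Z → ℝ) (ha : ∀ z, 0 ≤ a z) (q : Z → ℝ) (hq : ∀ z, 0 < q z) (hq1 : ∑ z, q z = 1) :
    (∑ z, a z ^ (1 / (1 - γ))) ^ (1 - γ) ≤ ∑ z, a z * q z ^ γ := by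
  set β : ℝ := 1 / (1 - γ) with hβ
  have h1γ : (1 : ℝ) < 1 - γ := by linarith
  have hβ0 : 0 < β := by positivity
  have hβ1 : β < 1 := by rw [hβ, div_lt_one (by linarith)]; linarith
  have hF0 : (0 : ℝ) ≤ ∑ z, a z * q z ^ γ :=
    Finset.sum_nonneg fun z _ => mul_nonneg (ha z) (rpow_nonneg (hq z).le γ)
  have hpq : (1 / β).HolderConjugate (1 / (1 - β)) := by
    rw [Real.holderConjugate_iff]
    constructor
    · rw [lt_div_iff₀ hβ0]; linarith
    · rw [one_div, one_div, inv_inv, inv_inv]; ring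
  have h := Real.inner_le_Lp_mul_Lq_of_nonneg (s := Finset.univ) hpq
    (f := fun z => (a z * q z ^ γ) ^ β) (g := fun z => q z ^ (1 - β))
    (fun i _ => rpow_nonneg (mul_nonneg (ha i) (rpow_nonneg (hq i).le γ)) β)
    (fun i _ => rpow_nonneg (hq i).le _)
  have eexp : γ * β + (1 - β) = 0 := by
    rw [hβ]; field_simp; ring
  have e0 : ∀ z : Z, (a z * q z ^ γ) ^ β * q z ^ (1 - β) = a z ^ β := by
    intro z
    rw [Real.mul_rpow (ha z) (rpow_nonneg (hq z).le γ), ← Real.rpow_mul (hq z).le,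
      mul_assoc, ← Real.rpow_add (hq z), eexp, Real.rpow_zero, mul_one]
  have e1 : (1 : ℝ) / (1 / β) = β := by field_simp
  have e2 : (1 : ℝ) / (1 / (1 - β)) = 1 - β := by
    rw [one_div, one_div, inv_inv]
  rw [e1, e2] at h
  have e3 : ∀ z : Z, ((a z * q z ^ γ) ^ β) ^ (1 / β) = a z * q z ^ γ := fun z => by
    rw [one_div, Real.rpow_rpow_inv (mul_nonneg (ha z) (rpow_nonneg (hq z).le γ)) hβ0.ne']
  have e4 : ∀ z : Z, (q z ^ (1 - β)) ^ (1 / (1 - β)) = q z := fun z => by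
    rw [one_div, Real.rpow_rpow_inv (hq z).le (by linarith : (1:ℝ) - β ≠ 0)]
  simp_rw [e0, e3, e4, hq1, Real.one_rpow, mul_one] at h
  -- h : ∑ a^β ≤ F^β
  have h2 := Real.rpow_le_rpow (Finset.sum_nonneg fun z _ => rpow_nonneg (ha z) β) h
    (by positivity : (0:ℝ) ≤ 1/β)
  rw [one_div, Real.rpow_rpow_inv hF0 hβ0.ne'] at h2
  have e5 : β⁻¹ = 1 - γ := by rw [hβ, one_div, inv_inv]
  rwa [e5] at h2

end core

section seq

variable {Z : Type*} [Fintype Z] [Nonempty Z]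

/-- Approximating sequence achieving the Hölder bound in the limit. -/
lemma sib_seq {γ : ℝ} (hγ0 : γ ≠ 0) (hγ1 : γ < 1)
    (a : Z → ℝ) (ha : ∀ z, 0 ≤ a z) :
    ∃ q : ℕ → Z → ℝ, (∀ n, (∀ z, 0 < q n z) ∧ ∑ z, q n z = 1) ∧
      Tendsto (fun n => ∑ z, a z * q n z ^ γ) atTop
        (nhds ((∑ z, a z ^ (1 / (1 - γ))) ^ (1 - γ))) := by
  set β : ℝ := 1 / (1 - γ) with hβ
  have h1γ : (0 : ℝ) < 1 - γ := by
    rcases lt_or_gt_of_ne hγ0 with h | h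
    · linarith
    · linarith
  have hβ0 : 0 < β := by positivity
  set Sa : ℝ := ∑ z, a z ^ β with hSa
  have hSa0 : 0 ≤ Sa := Finset.sum_nonneg fun z _ => rpow_nonneg (ha z) β
  set N : ℝ := (Fintype.card Z : ℝ) with hN
  have hN0 : 0 < N := by
    rw [hN]; exact_mod_cast Fintype.card_pos
  set ε : ℕ → ℝ := fun n => 1 / (n + 1) with hε
  have hε0 : ∀ n, 0 < ε n := fun n => by positivity
  have hεlim : Tendsto ε atTop (nhds 0) := tendsto_one_div_add_atTop_nhds_zero_nat
  refine ⟨fun n z => (a z ^ β + ε n) / (Sa + N * ε n), fun n => ⟨fun z => ?_, ?_⟩, ?_⟩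
  · have hd : 0 < Sa + N * ε n := by
      have := mul_pos hN0 (hε0 n); linarith
    exact div_pos (by have := rpow_nonneg (ha z) β; have := hε0 n; linarith) hd
  · rw [← Finset.sum_div]
    rw [Finset.sum_add_distrib, Finset.sum_const, nsmul_eq_mul]
    rw [div_eq_one_iff_eq (by have := mul_pos hN0 (hε0 n); linarith)]
    rw [Finset.card_univ]
  · -- limit
    have key : ∀ z : Z, Tendsto (fun n => a z * ((a z ^ β + ε n) / (Sa + N * ε n)) ^ γ)
        atTop (nhds (a z * (a z ^ β / Sa) ^ γ)) := by
      intro z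
      rcases eq_or_lt_of_le (ha z) with hz | hz
      · simp [← hz]
      · have hSpos : 0 < Sa := by
          have h1 : a z ^ β ≤ Sa :=
            Finset.single_le_sum (fun i _ => rpow_nonneg (ha i) β) (Finset.mem_univ z)
          have h2 : 0 < a z ^ β := rpow_pos_of_pos hz β
          linarith
        have hbase : Tendsto (fun n => (a z ^ β + ε n) / (Sa + N * ε n)) atTop
            (nhds (a z ^ β / Sa)) := by
          have h1 : Tendsto (fun n => a z ^ β + ε n) atTop (nhds (a z ^ β + 0)) :=
            tendsto_const_nhds.add hεlim
          have h2 : Tendsto (fun n => Sa + N * ε n) atTop (nhds (Sa + N * 0)) :=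
            tendsto_const_nhds.add (tendsto_const_nhds.mul hεlim)
          rw [add_zero] at h1
          rw [mul_zero, add_zero] at h2
          exact h1.div h2 hSpos.ne'
        have hne : a z ^ β / Sa ≠ 0 :=
          (div_pos (rpow_pos_of_pos hz β) hSpos).ne'
        exact (hbase.rpow_const (Or.inl hne)).const_mul _
    have hsum := tendsto_finset_sum Finset.univ (fun z _ => key z)
    have hval : ∑ z, a z * (a z ^ β / Sa) ^ γ = Sa ^ (1 - γ) := by
      rcases eq_or_lt_of_le hSa0 with hS | hS
      · have hz0 : ∀ z : Z, a z = 0 := by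
          intro z
          by_contra hne
          have hz : 0 < a z := lt_of_le_of_ne (ha z) (Ne.symm hne)
          have h1 : a z ^ β ≤ Sa :=
            Finset.single_le_sum (fun i _ => rpow_nonneg (ha i) β) (Finset.mem_univ z)
          have h2 : 0 < a z ^ β := rpow_pos_of_pos hz β
          rw [← hS] at h1; linarith
        rw [← hS, Real.zero_rpow (by linarith : (1:ℝ) - γ ≠ 0)]
        simp [hz0]
      · have e1 : ∀ z : Z, a z * (a z ^ β / Sa) ^ γ = a z ^ β / Sa ^ γ := by
          intro z
          rw [Real.div_rpow (rpow_nonneg (ha z) β) hSa0]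
          rcases eq_or_lt_of_le (ha z) with hz | hz
          · rw [← hz, Real.zero_rpow (by positivity : β ≠ 0), Real.zero_rpow hγ0,
              zero_mul, zero_div]
          · have key2 : a z * (a z ^ β) ^ γ = a z ^ β := by
              rw [← Real.rpow_mul (ha z)]
              nth_rewrite 1 [← Real.rpow_one (a z)]
              rw [← Real.rpow_add hz]
              congr 1
              rw [hβ]
              field_simp
              ring
            rw [← mul_div_assoc, key2]
        simp_rw [e1]
        rw [← Finset.sum_div, ← hSa]
        nth_rewrite 1 [← Real.rpow_one Sa]
        rw [← Real.rpow_sub hS]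
    rw [hval] at hsum
    exact hsum

end seq

lemma sib_sInf_eq {S : Set ℝ} {K : ℝ} (hlb : ∀ v ∈ S, K ≤ v) {u : ℕ → ℝ}
    (hu : ∀ n, u n ∈ S) (hlim : Tendsto u atTop (nhds K)) : sInf S = K := by
  have hglb : IsGLB S K :=
    ⟨hlb, fun b hb => ge_of_tendsto hlim (Eventually.of_forall fun n => hb (hu n))⟩
  exact hglb.csInf_eq ⟨u 0, hu 0⟩

lemma sib_sSup_eq {S : Set ℝ} {K : ℝ} (hub : ∀ v ∈ S, v ≤ K) {u : ℕ → ℝ}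
    (hu : ∀ n, u n ∈ S) (hlim : Tendsto u atTop (nhds K)) : sSup S = K := by
  have hlub : IsLUB S K :=
    ⟨hub, fun b hb => le_of_tendsto hlim (Eventually.of_forall fun n => hb (hu n))⟩
  exact hlub.csSup_eq ⟨u 0, hu 0⟩

/-- Generalized g-leakage representation of Sibson mutual information: the Sibson MI of
order `α` equals the generalized multiplicative g-leakage for the KN function
`ln_{1/α}`, the soft 0-1 score, and the `(1/α)`-tilted prior. -/
theorem sibson_mi_eq_generalized_leakage
    {X Y : Type*} [Fintype X] [Fintype Y] [Nonempty X] [Nonempty Y]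
    (α : ℝ) (hα0 : 0 < α) (hα1 : α ≠ 1)
    (p : X → ℝ) (hp : ∀ x, 0 < p x) (hp1 : (∑ x, p x) = 1)
    (W : X → Y → ℝ) (hW : ∀ x y, 0 ≤ W x y) (hW1 : ∀ x, (∑ y, W x y) = 1)
    (pt : X → ℝ) (hpt : ∀ x, pt x = p x ^ (1 / α) / ∑ x', p x' ^ (1 / α)) :
    sInf {v : ℝ | ∃ q : Y → ℝ, (∀ y, 0 < q y) ∧ (∑ y, q y) = 1 ∧
        v = (1 / (α - 1)) * Real.log (∑ z : X × Y, p z.1 * W z.1 z.2 ^ α * q z.2 ^ (1 - α))}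
    = Real.log (sSup {v : ℝ | ∃ r : Y → X → ℝ,
          (∀ y x, 0 < r y x) ∧ (∀ y, (∑ x, r y x) = 1) ∧
          v = (∑ z : X × Y, pt z.1 * W z.1 z.2 * r z.2 z.1 ^ ((α - 1) / α)) ^ (α / (α - 1))})
      - Real.log (sSup {v : ℝ | ∃ r₀ : X → ℝ,
          (∀ x, 0 < r₀ x) ∧ (∑ x, r₀ x) = 1 ∧
          v = (∑ x, pt x * r₀ x ^ ((α - 1) / α)) ^ (α / (α - 1))}) := by
  have hαne : α ≠ 0 := hα0.ne'
  have hα1' : α - 1 ≠ 0 := sub_ne_zero.mpr hα1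
  -- exponent arithmetic
  have ec2 : 1 - (α - 1) / α = 1 / α := by field_simp; ring
  have ec1 : 1 / (1 - (α - 1) / α) = α := by rw [ec2, one_div_one_div]
  have ea2 : 1 - (1 - α) = α := by ring
  have ea1 : 1 / (1 - (1 - α)) = 1 / α := by rw [ea2]
  have hcne : (α - 1) / α ≠ 0 := div_ne_zero hα1' hαne
  have hclt : (α - 1) / α < 1 := by
    rcases lt_or_gt_of_ne hα1 with h | h
    · have := div_neg_of_neg_of_pos (show α - 1 < 0 by linarith) hα0
      linarith
    · rw [div_lt_one hα0]; linarith
  -- basic objects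
  set Z0 : ℝ := ∑ x', p x' ^ (1 / α) with hZ0
  have hZ : 0 < Z0 :=
    Finset.sum_pos (fun x _ => Real.rpow_pos_of_pos (hp x) _) Finset.univ_nonempty
  have hptpos : ∀ x, 0 < pt x := fun x => by
    rw [hpt]; exact div_pos (Real.rpow_pos_of_pos (hp x) _) hZ
  obtain ⟨x₀⟩ := (inferInstance : Nonempty X)
  have hy₀ : ∃ y, 0 < W x₀ y := by
    by_contra h
    push_neg at h
    have : ∑ y, W x₀ y = 0 :=
      Finset.sum_eq_zero fun y _ => le_antisymm (h y) (hW x₀ y)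
    rw [hW1 x₀] at this; norm_num at this
  obtain ⟨y₀, hy₀⟩ := hy₀
  set A : Y → ℝ := fun y => ∑ x, p x * W x y ^ α with hA
  have hA0 : ∀ y, 0 ≤ A y := fun y =>
    Finset.sum_nonneg fun x _ => mul_nonneg (hp x).le (Real.rpow_nonneg (hW x y) α)
  have hAy₀ : 0 < A y₀ :=
    Finset.sum_pos' (fun x _ => mul_nonneg (hp x).le (Real.rpow_nonneg (hW x y₀) α))
      ⟨x₀, Finset.mem_univ x₀, mul_pos (hp x₀) (Real.rpow_pos_of_pos hy₀ α)⟩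
  set T : ℝ := ∑ y, A y ^ (1 / α) with hT
  have hTpos : 0 < T :=
    Finset.sum_pos' (fun y _ => Real.rpow_nonneg (hA0 y) _)
      ⟨y₀, Finset.mem_univ y₀, Real.rpow_pos_of_pos hAy₀ _⟩
  -- sum rewrites
  have hsum1 : ∀ q : Y → ℝ,
      ∑ z : X × Y, p z.1 * W z.1 z.2 ^ α * q z.2 ^ (1 - α) = ∑ y, A y * q y ^ (1 - α) := by
    intro q
    rw [Fintype.sum_prod_type, Finset.sum_comm]
    refine Finset.sum_congr rfl fun y _ => ?_
    dsimp only
    rw [← Finset.sum_mul]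
  have hsum2 : ∀ r : Y → X → ℝ,
      ∑ z : X × Y, pt z.1 * W z.1 z.2 * r z.2 z.1 ^ ((α - 1) / α)
        = ∑ y, ∑ x, pt x * W x y * r y x ^ ((α - 1) / α) := by
    intro r
    rw [Fintype.sum_prod_type, Finset.sum_comm]
  -- ====== Part 1: the sInf ======
  have h1 : sInf {v : ℝ | ∃ q : Y → ℝ, (∀ y, 0 < q y) ∧ (∑ y, q y) = 1 ∧
      v = (1 / (α - 1)) * Real.log (∑ z : X × Y, p z.1 * W z.1 z.2 ^ α * q z.2 ^ (1 - α))}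
      = (1 / (α - 1)) * Real.log (T ^ α) := by
    have hK1pos : (0:ℝ) < T ^ α := Real.rpow_pos_of_pos hTpos α
    obtain ⟨qs, hqs, hqslim⟩ := sib_seq (γ := 1 - α) (by rwa [sub_ne_zero, ne_comm])
      (by linarith) A hA0
    rw [ea1, ea2] at hqslim
    refine sib_sInf_eq ?_ (u := fun n =>
      (1 / (α - 1)) * Real.log (∑ y, A y * qs n y ^ (1 - α))) ?_ ?_
    · rintro v ⟨q, hqpos, hq1, rfl⟩
      rw [hsum1 q]
      rcases lt_or_gt_of_ne hα1 with hlt | hgt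
      · -- α < 1 : F ≤ T^α, coefficient negative
        have hb := sib_bound_pos (γ := 1 - α) (by linarith) (by linarith) A hA0 q hqpos hq1
        rw [ea1, ea2] at hb
        have hFpos : 0 < ∑ y, A y * q y ^ (1 - α) :=
          Finset.sum_pos' (fun y _ => mul_nonneg (hA0 y) (Real.rpow_nonneg (hqpos y).le _))
            ⟨y₀, Finset.mem_univ y₀, mul_pos hAy₀ (Real.rpow_pos_of_pos (hqpos y₀) _)⟩
        exact mul_le_mul_of_nonpos_left (Real.log_le_log hFpos hb)
          (one_div_nonpos.mpr (by linarith))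
      · -- 1 < α : F ≥ T^α, coefficient positive
        have hb := sib_bound_neg (γ := 1 - α) (by linarith) A hA0 q hqpos hq1
        rw [ea1, ea2] at hb
        exact mul_le_mul_of_nonneg_left (Real.log_le_log hK1pos hb)
          (one_div_pos.mpr (by linarith)).le
    · intro n
      exact ⟨qs n, (hqs n).1, (hqs n).2, by rw [hsum1]⟩
    · exact (hqslim.log hK1pos.ne').const_mul _
  -- ====== Part 3: sSup over r₀ ======
  set K3 : ℝ := (∑ x, pt x ^ α) ^ (1 / α) with hK3
  have hK3pos : 0 < K3 :=
    Real.rpow_pos_of_pos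
      (Finset.sum_pos (fun x _ => Real.rpow_pos_of_pos (hptpos x) α) Finset.univ_nonempty) _
  have hδ0 : ∀ h : α < 1, α / (α - 1) ≤ 0 := fun h => by
    rw [div_nonpos_iff]; left; exact ⟨hα0.le, by linarith⟩
  have hδ0' : ∀ h : 1 < α, 0 ≤ α / (α - 1) := fun h =>
    (div_nonneg hα0.le (by linarith))
  have h3 : sSup {v : ℝ | ∃ r₀ : X → ℝ, (∀ x, 0 < r₀ x) ∧ (∑ x, r₀ x) = 1 ∧
      v = (∑ x, pt x * r₀ x ^ ((α - 1) / α)) ^ (α / (α - 1))} = K3 ^ (α / (α - 1)) := by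
    obtain ⟨qs, hqs, hqslim⟩ := sib_seq (γ := (α - 1) / α) hcne hclt pt
      (fun x => (hptpos x).le)
    rw [ec1, ec2] at hqslim
    refine sib_sSup_eq ?_
      (u := fun n => (∑ x, pt x * qs n x ^ ((α - 1) / α)) ^ (α / (α - 1))) ?_ ?_
    · rintro v ⟨r₀, hrpos, hr1, rfl⟩
      rcases lt_or_gt_of_ne hα1 with hlt | hgt
      · have hb := sib_bound_neg (γ := (α - 1) / α)
          (div_neg_of_neg_of_pos (by linarith) hα0) pt (fun x => (hptpos x).le) r₀ hrpos hr1
        rw [ec1, ec2] at hb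
        exact Real.rpow_le_rpow_of_nonpos hK3pos hb (hδ0 hlt)
      · have hb := sib_bound_pos (γ := (α - 1) / α)
          (div_pos (by linarith) hα0) hclt pt (fun x => (hptpos x).le) r₀ hrpos hr1
        rw [ec1, ec2] at hb
        have hF0 : 0 ≤ ∑ x, pt x * r₀ x ^ ((α - 1) / α) :=
          Finset.sum_nonneg fun x _ =>
            mul_nonneg (hptpos x).le (Real.rpow_nonneg (hrpos x).le _)
        exact Real.rpow_le_rpow hF0 hb (hδ0' hgt)
    · intro n
      exact ⟨qs n, (hqs n).1, (hqs n).2, rfl⟩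
    · exact hqslim.rpow_const (Or.inl hK3pos.ne')
  -- ====== Part 2: sSup over families r ======
  set K2 : ℝ := ∑ y, (∑ x, (pt x * W x y) ^ α) ^ (1 / α) with hK2
  have hay : ∀ y x, 0 ≤ pt x * W x y := fun y x => mul_nonneg (hptpos x).le (hW x y)
  have hK2pos : 0 < K2 := by
    refine Finset.sum_pos' (fun y _ => Real.rpow_nonneg
      (Finset.sum_nonneg fun x _ => Real.rpow_nonneg (hay y x) α) _)
      ⟨y₀, Finset.mem_univ y₀, Real.rpow_pos_of_pos ?_ _⟩
    exact Finset.sum_pos' (fun x _ => Real.rpow_nonneg (hay y₀ x) α)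
      ⟨x₀, Finset.mem_univ x₀,
        Real.rpow_pos_of_pos (mul_pos (hptpos x₀) hy₀) α⟩
  have h2 : sSup {v : ℝ | ∃ r : Y → X → ℝ,
      (∀ y x, 0 < r y x) ∧ (∀ y, (∑ x, r y x) = 1) ∧
      v = (∑ z : X × Y, pt z.1 * W z.1 z.2 * r z.2 z.1 ^ ((α - 1) / α)) ^ (α / (α - 1))}
      = K2 ^ (α / (α - 1)) := by
    have hex : ∀ y : Y, ∃ q : ℕ → X → ℝ,
        (∀ n, (∀ x, 0 < q n x) ∧ ∑ x, q n x = 1) ∧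
        Filter.Tendsto (fun n => ∑ x, pt x * W x y * q n x ^ ((α - 1) / α)) Filter.atTop
          (nhds ((∑ x, (pt x * W x y) ^ (1 / (1 - (α - 1) / α))) ^ (1 - (α - 1) / α))) :=
      fun y => sib_seq hcne hclt (fun x => pt x * W x y) (hay y)
    choose qf hqf hqflim using hex
    have hqflim' : ∀ y, Filter.Tendsto
        (fun n => ∑ x, pt x * W x y * qf y n x ^ ((α - 1) / α)) Filter.atTop
        (nhds ((∑ x, (pt x * W x y) ^ α) ^ (1 / α))) := fun y => by
      have := hqflim y
      rw [ec1, ec2] at this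
      exact this
    refine sib_sSup_eq ?_
      (u := fun n => (∑ y, ∑ x, pt x * W x y * qf y n x ^ ((α - 1) / α)) ^ (α / (α - 1))) ?_ ?_
    · rintro v ⟨r, hrpos, hr1, rfl⟩
      rw [hsum2 r]
      rcases lt_or_gt_of_ne hα1 with hlt | hgt
      · have hb : K2 ≤ ∑ y, ∑ x, pt x * W x y * r y x ^ ((α - 1) / α) := by
          rw [hK2]
          refine Finset.sum_le_sum fun y _ => ?_
          have hb1 := sib_bound_neg (γ := (α - 1) / α)
            (div_neg_of_neg_of_pos (by linarith) hα0) (fun x => pt x * W x y) (hay y)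
            (r y) (hrpos y) (hr1 y)
          rw [ec1, ec2] at hb1
          exact hb1
        exact Real.rpow_le_rpow_of_nonpos hK2pos hb (hδ0 hlt)
      · have hb : ∑ y, ∑ x, pt x * W x y * r y x ^ ((α - 1) / α) ≤ K2 := by
          rw [hK2]
          refine Finset.sum_le_sum fun y _ => ?_
          have hb1 := sib_bound_pos (γ := (α - 1) / α)
            (div_pos (by linarith) hα0) hclt (fun x => pt x * W x y) (hay y)
            (r y) (hrpos y) (hr1 y)
          rw [ec1, ec2] at hb1
          exact hb1
        have hG0 : 0 ≤ ∑ y, ∑ x, pt x * W x y * r y x ^ ((α - 1) / α) :=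
          Finset.sum_nonneg fun y _ => Finset.sum_nonneg fun x _ =>
            mul_nonneg (hay y x) (Real.rpow_nonneg (hrpos y x).le _)
        exact Real.rpow_le_rpow hG0 hb (hδ0' hgt)
    · intro n
      exact ⟨fun y => qf y n, fun y x => (hqf y n).1 x, fun y => (hqf y n).2,
        (congrArg (· ^ (α / (α - 1))) (hsum2 fun y => qf y n)).symm⟩
    · exact (tendsto_finset_sum Finset.univ fun y _ => hqflim' y).rpow_const
        (Or.inl hK2pos.ne')
  -- ====== Final arithmetic ======
  rw [h1, h2, h3]
  have hZα : (Z0 ^ α) ^ (1 / α) = Z0 := by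
    rw [← Real.rpow_mul hZ.le, mul_one_div, div_self hαne, Real.rpow_one]
  have hptα : ∀ x, pt x ^ α = p x / Z0 ^ α := by
    intro x
    rw [hpt x, Real.div_rpow (Real.rpow_nonneg (hp x).le _) hZ.le]
    congr 1
    rw [← Real.rpow_mul (hp x).le, one_div, inv_mul_cancel₀ hαne, Real.rpow_one]
  have hK3val : K3 = 1 / Z0 := by
    rw [hK3]
    simp_rw [hptα]
    rw [← Finset.sum_div, hp1,
      Real.div_rpow zero_le_one (Real.rpow_nonneg hZ.le α), Real.one_rpow, hZα]
  have hK2val : K2 = T / Z0 := by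
    rw [hK2, hT, Finset.sum_div]
    refine Finset.sum_congr rfl fun y _ => ?_
    have e : ∑ x, (pt x * W x y) ^ α = A y / Z0 ^ α := by
      rw [hA]
      dsimp only
      rw [Finset.sum_div]
      refine Finset.sum_congr rfl fun x _ => ?_
      rw [Real.mul_rpow (hptpos x).le (hW x y), hptα x, div_mul_eq_mul_div]
    rw [e, Real.div_rpow (hA0 y) (Real.rpow_nonneg hZ.le α), hZα]
  rw [hK2val, hK3val,
    Real.log_rpow hTpos, Real.log_rpow (div_pos hTpos hZ), Real.log_rpow (div_pos one_pos hZ),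
    Real.log_div hTpos.ne' hZ.ne', Real.log_div one_ne_zero hZ.ne', Real.log_one]
  field_simp
  ring
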